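/- (Power-scaling Case III, equation (38)) If 0 < α < 1, ε = 1 and γ > 0, then lim_{M→∞} R̃_i(M) = λ·log₂(1 + E_r·ψ_{AR,i}²/S) + λ·log₂(1 + E_r·ψ_{BR,i}²/S); that is, the asymptotic spectral efficiency is determined by the downlink phase and is independent of E_u. -/

import Mathlib

open Real Filter Topology Finset

noncomputable section

/-- `η = τ·p_p·β/(1+τ·p_p·β)`. -/
def etaP (τ pp β : ℝ) : ℝ := τ * pp * β / (1 + τ * pp * β)

/-- `ω = β(K+η)/(K+1)`. -/
def omegaP (τ pp β K : ℝ) : ℝ := β * (K + etaP τ pp β) / (K + 1)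

/-- `σ² = β/((1+τ·p_p·β)(K+1))`. -/
def sigma2P (τ pp β K : ℝ) : ℝ := β / ((1 + τ * pp * β) * (K + 1))

/-- Generic interference coefficient: with `(b₁,k₁)` and `(b₂,k₂)` the two links involved,
`b₁·b₂/((k₁+1)(k₂+1))·[(k₁+η₁)/(1+τ·p_p·b₂) + k₂·η₁ + k₁·η₂ + η₁·η₂]`.
It specializes to `ξ_{XR,ij}`, `χ_{XR,ij}` and `ζ_{XR,ij}` of (25)–(27). -/
def xiP (τ pp b1 k1 b2 k2 : ℝ) : ℝ :=
  b1 * b2 / ((k1 + 1) * (k2 + 1)) *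
    ((k1 + etaP τ pp b1) / (1 + τ * pp * b2) + k2 * etaP τ pp b1
      + k1 * etaP τ pp b2 + etaP τ pp b1 * etaP τ pp b2)

variable {N : ℕ}

/-- `q_i = p_u σ²_{AR,i} + p_u σ²_{BR,i} + 1`. -/
def qP (τ pp pu : ℝ) (βA βB KA KB : Fin N → ℝ) (i : Fin N) : ℝ :=
  pu * sigma2P τ pp (βA i) (KA i) + pu * sigma2P τ pp (βB i) (KB i) + 1

/-- `Q_i = Σ_{j≠i} p_u·(ξ_{AR,ij}+ξ_{BR,ij}+χ_{AR,ij}+χ_{BR,ij})`. -/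
def QP (τ pp pu : ℝ) (βA βB KA KB : Fin N → ℝ) (i : Fin N) : ℝ :=
  ∑ j ∈ Finset.univ \ {i},
    pu * (xiP τ pp (βA i) (KA i) (βA j) (KA j) + xiP τ pp (βB i) (KB i) (βA j) (KA j)
      + xiP τ pp (βA i) (KA i) (βB j) (KB j) + xiP τ pp (βB i) (KB i) (βB j) (KB j))

/-- `Z_{ij} = p_r·(ζ_{AR,ij}+ζ_{BR,ij})`. -/
def ZP (τ pp pr : ℝ) (βA βB KA KB : Fin N → ℝ) (i j : Fin N) : ℝ :=
  pr * (xiP τ pp (βA j) (KA j) (βA i) (KA i) + xiP τ pp (βB j) (KB j) (βA i) (KA i))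

/-- `R̃_{1,i}(M)` of Theorem 1 (uplink phase). -/
def R1P (lam τ pp pu : ℝ) (βA βB KA KB : Fin N → ℝ) (i : Fin N) (M : ℝ) : ℝ :=
  lam * logb 2 (1 +
    (M * pu * (omegaP τ pp (βA i) (KA i)) ^ 2 + M * pu * (omegaP τ pp (βB i) (KB i)) ^ 2)
      / ((omegaP τ pp (βA i) (KA i) + omegaP τ pp (βB i) (KB i)) * qP τ pp pu βA βB KA KB i
          + QP τ pp pu βA βB KA KB i))

/-- `R̃_{AR,i}(M)` of Theorem 1. -/
def RARP (lam τ pp pu : ℝ) (βA βB KA KB : Fin N → ℝ) (i : Fin N) (M : ℝ) : ℝ :=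
  lam * logb 2 (1 + M * pu * (omegaP τ pp (βA i) (KA i)) ^ 2
      / ((omegaP τ pp (βA i) (KA i) + omegaP τ pp (βB i) (KB i)) * qP τ pp pu βA βB KA KB i
          + QP τ pp pu βA βB KA KB i))

/-- `R̃_{BR,i}(M)` of Theorem 1. -/
def RBRP (lam τ pp pu : ℝ) (βA βB KA KB : Fin N → ℝ) (i : Fin N) (M : ℝ) : ℝ :=
  lam * logb 2 (1 + M * pu * (omegaP τ pp (βB i) (KB i)) ^ 2
      / ((omegaP τ pp (βA i) (KA i) + omegaP τ pp (βB i) (KB i)) * qP τ pp pu βA βB KA KB i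
          + QP τ pp pu βA βB KA KB i))

/-- `R̃_{RA,i}(M)` of Theorem 1 (downlink to `U_{A,i}`). -/
def RRAP (lam τ pp pr : ℝ) (βA βB KA KB : Fin N → ℝ) (i : Fin N) (M : ℝ) : ℝ :=
  lam * logb 2 (1 + M * pr * (omegaP τ pp (βA i) (KA i)) ^ 2
      / (∑ j, (omegaP τ pp (βA j) (KA j) + omegaP τ pp (βB j) (KB j)
          + ZP τ pp pr βA βB KA KB i j)))

/-- `R̃_{RB,i}(M)` of Theorem 1 (downlink to `U_{B,i}`). -/
def RRBP (lam τ pp pr : ℝ) (βA βB KA KB : Fin N → ℝ) (i : Fin N) (M : ℝ) : ℝ :=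
  lam * logb 2 (1 + M * pr * (omegaP τ pp (βB i) (KB i)) ^ 2
      / (∑ j, (omegaP τ pp (βA j) (KA j) + omegaP τ pp (βB j) (KB j)
          + ZP τ pp pr βA βB KA KB i j)))

/-- `R̃_{2,i}(M) = min(R̃_{AR,i}, R̃_{RB,i}) + min(R̃_{BR,i}, R̃_{RA,i})`. -/
def R2P (lam τ pp pu pr : ℝ) (βA βB KA KB : Fin N → ℝ) (i : Fin N) (M : ℝ) : ℝ :=
  min (RARP lam τ pp pu βA βB KA KB i M) (RRBP lam τ pp pr βA βB KA KB i M)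
    + min (RBRP lam τ pp pu βA βB KA KB i M) (RRAP lam τ pp pr βA βB KA KB i M)

/-- `R̃_i(M) = min(R̃_{1,i}(M), R̃_{2,i}(M))`. -/
def RtotP (lam τ pp pu pr : ℝ) (βA βB KA KB : Fin N → ℝ) (i : Fin N) (M : ℝ) : ℝ :=
  min (R1P lam τ pp pu βA βB KA KB i M) (R2P lam τ pp pu pr βA βB KA KB i M)

end


section AuxLemmas

open Real Filter Topology Finset

private lemma tendsto_min_atTop_nhds {f g : ℕ → ℝ} {l : ℝ}
    (hf : Tendsto f atTop atTop) (hg : Tendsto g atTop (𝓝 l)) :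
    Tendsto (fun n => min (f n) (g n)) atTop (𝓝 l) := by
  refine Tendsto.congr' ?_ hg
  filter_upwards [hf.eventually_ge_atTop (l + 1),
    hg.eventually_lt_const (show l < l + 1 by linarith)] with n h1 h2
  exact (min_eq_right (by linarith)).symm

private lemma tendsto_one_add {pp : ℕ → ℝ} (h : Tendsto pp atTop (𝓝 0)) (τ β : ℝ) :
    Tendsto (fun M => 1 + τ * pp M * β) atTop (𝓝 1) := by
  have h1 : Tendsto (fun M => τ * pp M * β) atTop (𝓝 (τ * 0 * β)) :=
    (h.const_mul τ).mul_const β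
  have := (tendsto_const_nhds : Tendsto (fun _ : ℕ => (1:ℝ)) atTop (𝓝 1)).add h1
  simpa using this

private lemma tendsto_etaP {pp : ℕ → ℝ} (h : Tendsto pp atTop (𝓝 0)) (τ β : ℝ) :
    Tendsto (fun M => etaP τ (pp M) β) atTop (𝓝 0) := by
  have h1 : Tendsto (fun M => τ * pp M * β) atTop (𝓝 (τ * 0 * β)) :=
    (h.const_mul τ).mul_const β
  have h1' : Tendsto (fun M => τ * pp M * β) atTop (𝓝 0) := by simpa using h1
  have := h1'.div (tendsto_one_add h τ β) one_ne_zero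
  simpa [etaP, Pi.div_def] using this

private lemma tendsto_omegaP {pp : ℕ → ℝ} (h : Tendsto pp atTop (𝓝 0)) (τ β K : ℝ) :
    Tendsto (fun M => omegaP τ (pp M) β K) atTop (𝓝 (β * K / (K + 1))) := by
  have h1 : Tendsto (fun M => β * (K + etaP τ (pp M) β) / (K + 1)) atTop
      (𝓝 (β * (K + 0) / (K + 1))) :=
    (((tendsto_const_nhds : Tendsto (fun _ : ℕ => K) atTop (𝓝 K)).add
      (tendsto_etaP h τ β)).const_mul β).div_const (K + 1)
  simpa [omegaP] using h1

private lemma tendsto_sigma2P {pp : ℕ → ℝ} (h : Tendsto pp atTop (𝓝 0)) (τ β K : ℝ)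
    (hK : K + 1 ≠ 0) :
    Tendsto (fun M => sigma2P τ (pp M) β K) atTop (𝓝 (β / (K + 1))) := by
  have h2 : Tendsto (fun M => (1 + τ * pp M * β) * (K + 1)) atTop (𝓝 (1 * (K + 1))) :=
    (tendsto_one_add h τ β).mul_const (K + 1)
  have := (tendsto_const_nhds : Tendsto (fun _ : ℕ => β) atTop (𝓝 β)).div h2
    (by simpa using hK)
  simpa [sigma2P, Pi.div_def] using this

private lemma tendsto_xiP {pp : ℕ → ℝ} (h : Tendsto pp atTop (𝓝 0)) (τ b1 k1 b2 k2 : ℝ) :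
    Tendsto (fun M => xiP τ (pp M) b1 k1 b2 k2) atTop
      (𝓝 (b1 * b2 / ((k1 + 1) * (k2 + 1)) * k1)) := by
  have e1 := tendsto_etaP h τ b1
  have e2 := tendsto_etaP h τ b2
  have t1 : Tendsto (fun M => (k1 + etaP τ (pp M) b1) / (1 + τ * pp M * b2)) atTop
      (𝓝 ((k1 + 0) / 1)) :=
    ((tendsto_const_nhds : Tendsto (fun _ : ℕ => k1) atTop (𝓝 k1)).add e1).div
      (tendsto_one_add h τ b2) one_ne_zero
  have t2 : Tendsto (fun M => k2 * etaP τ (pp M) b1) atTop (𝓝 (k2 * 0)) := e1.const_mul k2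
  have t3 : Tendsto (fun M => k1 * etaP τ (pp M) b2) atTop (𝓝 (k1 * 0)) := e2.const_mul k1
  have t4 : Tendsto (fun M => etaP τ (pp M) b1 * etaP τ (pp M) b2) atTop (𝓝 (0 * 0)) :=
    e1.mul e2
  have := (((t1.add t2).add t3).add t4).const_mul (b1 * b2 / ((k1 + 1) * (k2 + 1)))
  simpa [xiP] using this

end AuxLemmas

/-- Power-scaling Case III, equation (38): if `0 < α < 1`, `ε = 1` and
`γ > 0` then `R̃_i(M) → λ·log₂(1 + E_r·ψ_{AR,i}²/S) + λ·log₂(1 + E_r·ψ_{BR,i}²/S)`: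
the asymptotic SE is determined by the downlink phase and is independent of `E_u`. -/
theorem power_scaling_case_III
    (N : ℕ) (hN : 1 ≤ N) (i : Fin N) (T τ : ℝ) (hτ : 0 < τ) (hT : τ < T)
    (lam : ℝ) (hlam : lam = (T - τ) / (2 * T))
    (Eu Er Ep : ℝ) (hEu : 0 < Eu) (hEr : 0 < Er) (hEp : 0 < Ep)
    (βA βB KA KB : Fin N → ℝ)
    (hβA : ∀ j, 0 < βA j) (hβB : ∀ j, 0 < βB j)
    (hKA : ∀ j, 0 < KA j) (hKB : ∀ j, 0 < KB j)
    (α ε γ : ℝ) (hα0 : 0 < α) (hα1 : α < 1) (hε : ε = 1) (hγ : 0 < γ)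
    (psiA psiB : Fin N → ℝ)
    (hpsiA : ∀ j, psiA j = βA j * KA j / (KA j + 1))
    (hpsiB : ∀ j, psiB j = βB j * KB j / (KB j + 1))
    (S : ℝ) (hS : S = ∑ j, (psiA j + psiB j)) :
    Tendsto (fun M : ℕ =>
        RtotP lam τ (Ep / (M : ℝ) ^ γ) (Eu / (M : ℝ) ^ α) (Er / (M : ℝ) ^ ε)
          βA βB KA KB i (M : ℝ))
      atTop
      (𝓝 (lam * logb 2 (1 + Er * (psiA i) ^ 2 / S)
          + lam * logb 2 (1 + Er * (psiB i) ^ 2 / S))) := by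
  have hT0 : 0 < T := hτ.trans hT
  have hlam0 : 0 < lam := by
    rw [hlam]; apply div_pos <;> linarith
  -- limits of the power sequences
  have hpp : Tendsto (fun M : ℕ => Ep / (M : ℝ) ^ γ) atTop (𝓝 0) :=
    tendsto_const_nhds.div_atTop ((tendsto_rpow_atTop hγ).comp tendsto_natCast_atTop_atTop)
  have hpu : Tendsto (fun M : ℕ => Eu / (M : ℝ) ^ α) atTop (𝓝 0) :=
    tendsto_const_nhds.div_atTop ((tendsto_rpow_atTop hα0).comp tendsto_natCast_atTop_atTop)
  have hMpu : Tendsto (fun M : ℕ => (M : ℝ) * (Eu / (M : ℝ) ^ α)) atTop atTop := by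
    have h1 : Tendsto (fun M : ℕ => Eu * (M : ℝ) ^ (1 - α)) atTop atTop :=
      Tendsto.const_mul_atTop hEu
        ((tendsto_rpow_atTop (by linarith)).comp tendsto_natCast_atTop_atTop)
    refine h1.congr' ?_
    filter_upwards [eventually_ge_atTop 1] with M hM
    have hM0 : (0 : ℝ) < (M : ℝ) := by exact_mod_cast Nat.lt_of_lt_of_le Nat.zero_lt_one hM
    have hMα : ((M : ℝ) ^ α) ≠ 0 := (Real.rpow_pos_of_pos hM0 α).ne'
    rw [Real.rpow_sub hM0, Real.rpow_one]
    field_simp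
  -- positivity of psi
  have hψA : ∀ j, 0 < psiA j := fun j => by
    rw [hpsiA j]; exact div_pos (mul_pos (hβA j) (hKA j)) (by linarith [hKA j])
  have hψB : ∀ j, 0 < psiB j := fun j => by
    rw [hpsiB j]; exact div_pos (mul_pos (hβB j) (hKB j)) (by linarith [hKB j])
  have hSpos : 0 < S := by
    rw [hS]
    have : Nonempty (Fin N) := ⟨i⟩
    exact Finset.sum_pos (fun j _ => by have := hψA j; have := hψB j; linarith)
      Finset.univ_nonempty
  -- omega limits
  have hωA : ∀ j, Tendsto (fun M : ℕ => omegaP τ (Ep / (M : ℝ) ^ γ) (βA j) (KA j)) atTop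
      (𝓝 (psiA j)) := fun j => by
    have := tendsto_omegaP hpp τ (βA j) (KA j)
    rwa [← hpsiA j] at this
  have hωB : ∀ j, Tendsto (fun M : ℕ => omegaP τ (Ep / (M : ℝ) ^ γ) (βB j) (KB j)) atTop
      (𝓝 (psiB j)) := fun j => by
    have := tendsto_omegaP hpp τ (βB j) (KB j)
    rwa [← hpsiB j] at this
  -- q_i → 1
  have hσA := tendsto_sigma2P hpp τ (βA i) (KA i) (by have := hKA i; intro h; linarith)
  have hσB := tendsto_sigma2P hpp τ (βB i) (KB i) (by have := hKB i; intro h; linarith)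
  have hq : Tendsto (fun M : ℕ =>
      qP τ (Ep / (M : ℝ) ^ γ) (Eu / (M : ℝ) ^ α) βA βB KA KB i) atTop (𝓝 1) := by
    simp only [qP]
    have := ((hpu.mul hσA).add (hpu.mul hσB)).add
      (tendsto_const_nhds : Tendsto (fun _ : ℕ => (1:ℝ)) atTop (𝓝 1))
    simpa using this
  -- Q_i → 0
  have hQ : Tendsto (fun M : ℕ =>
      QP τ (Ep / (M : ℝ) ^ γ) (Eu / (M : ℝ) ^ α) βA βB KA KB i) atTop (𝓝 0) := by
    have h : Tendsto (fun M : ℕ =>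
        QP τ (Ep / (M : ℝ) ^ γ) (Eu / (M : ℝ) ^ α) βA βB KA KB i) atTop
        (𝓝 (∑ _j ∈ Finset.univ \ {i}, (0:ℝ))) := by
      simp only [QP]
      refine tendsto_finset_sum _ (fun j _ => ?_)
      have h1 := tendsto_xiP hpp τ (βA i) (KA i) (βA j) (KA j)
      have h2 := tendsto_xiP hpp τ (βB i) (KB i) (βA j) (KA j)
      have h3 := tendsto_xiP hpp τ (βA i) (KA i) (βB j) (KB j)
      have h4 := tendsto_xiP hpp τ (βB i) (KB i) (βB j) (KB j)
      have := hpu.mul (((h1.add h2).add h3).add h4)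
      simpa using this
    simpa using h
  -- uplink denominator
  have hψi : 0 < psiA i + psiB i := by have := hψA i; have := hψB i; linarith
  have hden : Tendsto (fun M : ℕ =>
      (omegaP τ (Ep / (M : ℝ) ^ γ) (βA i) (KA i)
        + omegaP τ (Ep / (M : ℝ) ^ γ) (βB i) (KB i))
        * qP τ (Ep / (M : ℝ) ^ γ) (Eu / (M : ℝ) ^ α) βA βB KA KB i
        + QP τ (Ep / (M : ℝ) ^ γ) (Eu / (M : ℝ) ^ α) βA βB KA KB i) atTop
      (𝓝 (psiA i + psiB i)) := by
    have := (((hωA i).add (hωB i)).mul hq).add hQ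
    simpa using this
  have hdeninv := hden.inv₀ hψi.ne'
  -- downlink sum → S
  have hZ : ∀ j, Tendsto (fun M : ℕ =>
      ZP τ (Ep / (M : ℝ) ^ γ) (Er / (M : ℝ) ^ ε) βA βB KA KB i j) atTop (𝓝 0) := fun j => by
    have hpr : Tendsto (fun M : ℕ => Er / (M : ℝ) ^ ε) atTop (𝓝 0) :=
      tendsto_const_nhds.div_atTop
        ((tendsto_rpow_atTop (by rw [hε]; norm_num)).comp tendsto_natCast_atTop_atTop)
    have h1 := tendsto_xiP hpp τ (βA j) (KA j) (βA i) (KA i)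
    have h2 := tendsto_xiP hpp τ (βB j) (KB j) (βA i) (KA i)
    have := hpr.mul (h1.add h2)
    simpa [ZP] using this
  have hSum : Tendsto (fun M : ℕ =>
      ∑ j, (omegaP τ (Ep / (M : ℝ) ^ γ) (βA j) (KA j)
        + omegaP τ (Ep / (M : ℝ) ^ γ) (βB j) (KB j)
        + ZP τ (Ep / (M : ℝ) ^ γ) (Er / (M : ℝ) ^ ε) βA βB KA KB i j)) atTop (𝓝 S) := by
    have h := tendsto_finset_sum Finset.univ
      (fun j (_ : j ∈ Finset.univ) => (((hωA j).add (hωB j)).add (hZ j)))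
    rw [hS]
    simpa using h
  -- downlink numerators: M * p_r = Er eventually
  have hMpr : ∀ᶠ M : ℕ in atTop, (M : ℝ) * (Er / (M : ℝ) ^ ε) = Er := by
    filter_upwards [eventually_ge_atTop 1] with M hM
    have hM0 : (0 : ℝ) < (M : ℝ) := by exact_mod_cast Nat.lt_of_lt_of_le Nat.zero_lt_one hM
    rw [hε, Real.rpow_one, mul_div_cancel₀ _ hM0.ne']
  have hnumA : Tendsto (fun M : ℕ =>
      (M : ℝ) * (Er / (M : ℝ) ^ ε) * omegaP τ (Ep / (M : ℝ) ^ γ) (βA i) (KA i) ^ 2) atTop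
      (𝓝 (Er * psiA i ^ 2)) := by
    have h1 : Tendsto (fun M : ℕ =>
        Er * omegaP τ (Ep / (M : ℝ) ^ γ) (βA i) (KA i) ^ 2) atTop (𝓝 (Er * psiA i ^ 2)) :=
      ((hωA i).pow 2).const_mul Er
    refine h1.congr' ?_
    filter_upwards [hMpr] with M hM
    rw [hM]
  have hnumB : Tendsto (fun M : ℕ =>
      (M : ℝ) * (Er / (M : ℝ) ^ ε) * omegaP τ (Ep / (M : ℝ) ^ γ) (βB i) (KB i) ^ 2) atTop
      (𝓝 (Er * psiB i ^ 2)) := by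
    have h1 : Tendsto (fun M : ℕ =>
        Er * omegaP τ (Ep / (M : ℝ) ^ γ) (βB i) (KB i) ^ 2) atTop (𝓝 (Er * psiB i ^ 2)) :=
      ((hωB i).pow 2).const_mul Er
    refine h1.congr' ?_
    filter_upwards [hMpr] with M hM
    rw [hM]
  -- R_{RA} and R_{RB} limits
  have hargA : (0:ℝ) < 1 + Er * psiA i ^ 2 / S := by
    have : 0 < Er * psiA i ^ 2 / S := div_pos (mul_pos hEr (pow_pos (hψA i) 2)) hSpos
    linarith
  have hargB : (0:ℝ) < 1 + Er * psiB i ^ 2 / S := by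
    have : 0 < Er * psiB i ^ 2 / S := div_pos (mul_pos hEr (pow_pos (hψB i) 2)) hSpos
    linarith
  have hRRA : Tendsto (fun M : ℕ =>
      RRAP lam τ (Ep / (M : ℝ) ^ γ) (Er / (M : ℝ) ^ ε) βA βB KA KB i (M : ℝ)) atTop
      (𝓝 (lam * logb 2 (1 + Er * psiA i ^ 2 / S))) := by
    simp only [RRAP]
    have harg : Tendsto (fun M : ℕ => 1 +
        (M : ℝ) * (Er / (M : ℝ) ^ ε) * omegaP τ (Ep / (M : ℝ) ^ γ) (βA i) (KA i) ^ 2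
          / ∑ j, (omegaP τ (Ep / (M : ℝ) ^ γ) (βA j) (KA j)
            + omegaP τ (Ep / (M : ℝ) ^ γ) (βB j) (KB j)
            + ZP τ (Ep / (M : ℝ) ^ γ) (Er / (M : ℝ) ^ ε) βA βB KA KB i j)) atTop
        (𝓝 (1 + Er * psiA i ^ 2 / S)) :=
      tendsto_const_nhds.add (hnumA.div hSum hSpos.ne')
    have := ((Real.continuousAt_logb (b := 2) hargA.ne').tendsto.comp harg).const_mul lam
    simpa [Function.comp] using this
  have hRRB : Tendsto (fun M : ℕ =>
      RRBP lam τ (Ep / (M : ℝ) ^ γ) (Er / (M : ℝ) ^ ε) βA βB KA KB i (M : ℝ)) atTop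
      (𝓝 (lam * logb 2 (1 + Er * psiB i ^ 2 / S))) := by
    simp only [RRBP]
    have harg : Tendsto (fun M : ℕ => 1 +
        (M : ℝ) * (Er / (M : ℝ) ^ ε) * omegaP τ (Ep / (M : ℝ) ^ γ) (βB i) (KB i) ^ 2
          / ∑ j, (omegaP τ (Ep / (M : ℝ) ^ γ) (βA j) (KA j)
            + omegaP τ (Ep / (M : ℝ) ^ γ) (βB j) (KB j)
            + ZP τ (Ep / (M : ℝ) ^ γ) (Er / (M : ℝ) ^ ε) βA βB KA KB i j)) atTop
        (𝓝 (1 + Er * psiB i ^ 2 / S)) :=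
      tendsto_const_nhds.add (hnumB.div hSum hSpos.ne')
    have := ((Real.continuousAt_logb (b := 2) hargB.ne').tendsto.comp harg).const_mul lam
    simpa [Function.comp] using this
  -- uplink terms diverge
  have htermA : Tendsto (fun M : ℕ =>
      (M : ℝ) * (Eu / (M : ℝ) ^ α) * omegaP τ (Ep / (M : ℝ) ^ γ) (βA i) (KA i) ^ 2) atTop
      atTop :=
    Tendsto.atTop_mul_pos (pow_pos (hψA i) 2) hMpu ((hωA i).pow 2)
  have htermB : Tendsto (fun M : ℕ =>
      (M : ℝ) * (Eu / (M : ℝ) ^ α) * omegaP τ (Ep / (M : ℝ) ^ γ) (βB i) (KB i) ^ 2) atTop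
      atTop :=
    Tendsto.atTop_mul_pos (pow_pos (hψB i) 2) hMpu ((hωB i).pow 2)
  have hdivA : Tendsto (fun M : ℕ =>
      (M : ℝ) * (Eu / (M : ℝ) ^ α) * omegaP τ (Ep / (M : ℝ) ^ γ) (βA i) (KA i) ^ 2
        / ((omegaP τ (Ep / (M : ℝ) ^ γ) (βA i) (KA i)
            + omegaP τ (Ep / (M : ℝ) ^ γ) (βB i) (KB i))
          * qP τ (Ep / (M : ℝ) ^ γ) (Eu / (M : ℝ) ^ α) βA βB KA KB i
          + QP τ (Ep / (M : ℝ) ^ γ) (Eu / (M : ℝ) ^ α) βA βB KA KB i)) atTop atTop := by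
    have := Tendsto.atTop_mul_pos (inv_pos.mpr hψi) htermA hdeninv
    simpa [div_eq_mul_inv] using this
  have hdivB : Tendsto (fun M : ℕ =>
      (M : ℝ) * (Eu / (M : ℝ) ^ α) * omegaP τ (Ep / (M : ℝ) ^ γ) (βB i) (KB i) ^ 2
        / ((omegaP τ (Ep / (M : ℝ) ^ γ) (βA i) (KA i)
            + omegaP τ (Ep / (M : ℝ) ^ γ) (βB i) (KB i))
          * qP τ (Ep / (M : ℝ) ^ γ) (Eu / (M : ℝ) ^ α) βA βB KA KB i
          + QP τ (Ep / (M : ℝ) ^ γ) (Eu / (M : ℝ) ^ α) βA βB KA KB i)) atTop atTop := by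
    have := Tendsto.atTop_mul_pos (inv_pos.mpr hψi) htermB hdeninv
    simpa [div_eq_mul_inv] using this
  have hdiv1 : Tendsto (fun M : ℕ =>
      ((M : ℝ) * (Eu / (M : ℝ) ^ α) * omegaP τ (Ep / (M : ℝ) ^ γ) (βA i) (KA i) ^ 2
        + (M : ℝ) * (Eu / (M : ℝ) ^ α) * omegaP τ (Ep / (M : ℝ) ^ γ) (βB i) (KB i) ^ 2)
        / ((omegaP τ (Ep / (M : ℝ) ^ γ) (βA i) (KA i)
            + omegaP τ (Ep / (M : ℝ) ^ γ) (βB i) (KB i))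
          * qP τ (Ep / (M : ℝ) ^ γ) (Eu / (M : ℝ) ^ α) βA βB KA KB i
          + QP τ (Ep / (M : ℝ) ^ γ) (Eu / (M : ℝ) ^ α) βA βB KA KB i)) atTop atTop := by
    have hnum : Tendsto (fun M : ℕ =>
        (M : ℝ) * (Eu / (M : ℝ) ^ α) * omegaP τ (Ep / (M : ℝ) ^ γ) (βA i) (KA i) ^ 2
          + (M : ℝ) * (Eu / (M : ℝ) ^ α) * omegaP τ (Ep / (M : ℝ) ^ γ) (βB i) (KB i) ^ 2)
        atTop atTop := by
      refine tendsto_atTop_mono (fun M => ?_) htermA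
      have : (0:ℝ) ≤ (M : ℝ) * (Eu / (M : ℝ) ^ α)
          * omegaP τ (Ep / (M : ℝ) ^ γ) (βB i) (KB i) ^ 2 := by positivity
      linarith
    have := Tendsto.atTop_mul_pos (inv_pos.mpr hψi) hnum hdeninv
    simpa [div_eq_mul_inv] using this
  have hR1 : Tendsto (fun M : ℕ =>
      R1P lam τ (Ep / (M : ℝ) ^ γ) (Eu / (M : ℝ) ^ α) βA βB KA KB i (M : ℝ)) atTop atTop := by
    simp only [R1P]
    exact Tendsto.const_mul_atTop hlam0
      ((Real.tendsto_logb_atTop one_lt_two).comp (tendsto_atTop_add_const_left _ 1 hdiv1))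
  have hRAR : Tendsto (fun M : ℕ =>
      RARP lam τ (Ep / (M : ℝ) ^ γ) (Eu / (M : ℝ) ^ α) βA βB KA KB i (M : ℝ)) atTop atTop := by
    simp only [RARP]
    exact Tendsto.const_mul_atTop hlam0
      ((Real.tendsto_logb_atTop one_lt_two).comp (tendsto_atTop_add_const_left _ 1 hdivA))
  have hRBR : Tendsto (fun M : ℕ =>
      RBRP lam τ (Ep / (M : ℝ) ^ γ) (Eu / (M : ℝ) ^ α) βA βB KA KB i (M : ℝ)) atTop atTop := by
    simp only [RBRP]
    exact Tendsto.const_mul_atTop hlam0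
      ((Real.tendsto_logb_atTop one_lt_two).comp (tendsto_atTop_add_const_left _ 1 hdivB))
  -- assemble
  have hR2 : Tendsto (fun M : ℕ =>
      R2P lam τ (Ep / (M : ℝ) ^ γ) (Eu / (M : ℝ) ^ α) (Er / (M : ℝ) ^ ε) βA βB KA KB i (M : ℝ))
      atTop (𝓝 (lam * logb 2 (1 + Er * psiB i ^ 2 / S)
        + lam * logb 2 (1 + Er * psiA i ^ 2 / S))) := by
    simp only [R2P]
    exact (tendsto_min_atTop_nhds hRAR hRRB).add (tendsto_min_atTop_nhds hRBR hRRA)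
  rw [add_comm (lam * logb 2 (1 + Er * psiA i ^ 2 / S))
    (lam * logb 2 (1 + Er * psiB i ^ 2 / S))]
  simp only [RtotP]
  exact tendsto_min_atTop_nhds hR1 hR2
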